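/- In NIM(k+1,k) there is no move from a position x with B(x) even to a position x' with B(x') even. -/
import Mathlib


/-- `z` is a basic position with parameter `b`: coordinate sum `k*b`, all coordinates
at most `b`, all coordinates even if `b` is even, exactly one even if `b` is odd. -/
def IsBasic (k : ℕ) (z : Fin (k+1) → ℕ) (b : ℕ) : Prop :=
  (∑ i, z i) = k * b ∧ (∀ i, z i ≤ b) ∧
    (Even b → ∀ i, Even (z i)) ∧ (Odd b → ∃! i, Even (z i))

/-- `Pre k y x` means `y ⪯ x`: the sorted vector of `y` is componentwise ≤ that of `x`. -/
def Pre (k : ℕ) (y x : Fin (k+1) → ℕ) : Prop :=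
  ∀ i, (y ∘ Tuple.sort y) i ≤ (x ∘ Tuple.sort x) i

/-- `BVal k x = max { b : some basic z with parameter b satisfies z ⪯ x }`. -/
noncomputable def BVal (k : ℕ) (x : Fin (k+1) → ℕ) : ℕ :=
  sSup {b | ∃ z, IsBasic k z b ∧ Pre k z x}

/-- A move in NIM(k+1,k): keep coordinate `i`, decrease every other (positive) coordinate by 1. -/
def MoveK (k : ℕ) (x y : Fin (k+1) → ℕ) : Prop :=
  ∃ i, (∀ j, j ≠ i → 0 < x j) ∧ ∀ j, y j = if j = i then x j else x j - 1

/-- The M-move: keep a smallest even coordinate if one exists, otherwise keep a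
largest coordinate; decrease the other k (positive) coordinates by 1. -/
def MMove (k : ℕ) (x y : Fin (k+1) → ℕ) : Prop :=
  ∃ i, (∀ j, j ≠ i → 0 < x j) ∧
    ((∃ j, Even (x j)) → Even (x i) ∧ ∀ j, Even (x j) → x i ≤ x j) ∧
    ((∀ j, Odd (x j)) → ∀ j, x j ≤ x i) ∧
    (∀ j, y j = if j = i then x j else x j - 1)

/-- Exceptional position: all coordinates odd, all `< m`, and `|x| = k*m + k - 1`
for some even `m`. -/
def Exceptional (k : ℕ) (x : Fin (k+1) → ℕ) : Prop :=
  ∃ m, Even m ∧ (∀ i, Odd (x i)) ∧ (∀ i, x i < m) ∧ (∑ i, x i) = k * m + k - 1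

/-- `MVal k x m`: playing the M-rule from `x`, the game ends after exactly `m` moves. -/
inductive MVal (k : ℕ) : (Fin (k+1) → ℕ) → ℕ → Prop
  | zero (x) : (¬ ∃ y, MoveK k x y) → MVal k x 0
  | succ (x y m) : MMove k x y → MVal k y m → MVal k x (m + 1)

lemma aux_sorted_mono {n : ℕ} {f g : Fin n → ℕ} (h : ∀ i, f i ≤ g i) (i : Fin n) :
    (f ∘ Tuple.sort f) i ≤ (g ∘ Tuple.sort g) i := by
  classical
  by_contra hlt
  push_neg at hlt
  set v := (g ∘ Tuple.sort g) i with hv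
  have hsub1 : (Finset.Iic i).image (Tuple.sort g) ⊆ Finset.univ.filter (fun j => g j ≤ v) := by
    intro j hj
    simp only [Finset.mem_image, Finset.mem_Iic] at hj
    obtain ⟨l, hl, rfl⟩ := hj
    simp only [Finset.mem_filter, Finset.mem_univ, true_and]
    exact Tuple.monotone_sort g hl
  have hsub2 : Finset.univ.filter (fun j => g j ≤ v) ⊆ Finset.univ.filter (fun j => f j ≤ v) := by
    intro j hj
    simp only [Finset.mem_filter, Finset.mem_univ, true_and] at *
    exact (h j).trans hj
  have hsub3 : Finset.univ.filter (fun j => f j ≤ v) ⊆ (Finset.Iio i).image (Tuple.sort f) := by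
    intro j hj
    simp only [Finset.mem_filter, Finset.mem_univ, true_and] at hj
    have hj' : j = Tuple.sort f ((Tuple.sort f).symm j) := (Equiv.apply_symm_apply _ _).symm
    refine Finset.mem_image.2 ⟨(Tuple.sort f).symm j, ?_, hj'.symm⟩
    simp only [Finset.mem_Iio]
    by_contra hli
    push_neg at hli
    have := Tuple.monotone_sort f hli
    simp only [Function.comp_apply] at this
    rw [← hj'] at this
    simp only [Function.comp_apply] at hlt
    omega
  have c1 : ((Finset.Iic i).image (Tuple.sort g)).card = (i : ℕ) + 1 := by
    rw [Finset.card_image_of_injective _ (Tuple.sort g).injective, Fin.card_Iic]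
  have c2 : ((Finset.Iio i).image (Tuple.sort f)).card ≤ (i : ℕ) := by
    calc _ ≤ (Finset.Iio i).card := Finset.card_image_le
    _ = (i : ℕ) := Fin.card_Iio i
  have := Finset.card_le_card ((hsub1.trans hsub2).trans hsub3)
  omega

lemma aux_pre_of_pointwise {k : ℕ} {w x : Fin (k+1) → ℕ} (h : ∀ j, w j ≤ x j) : Pre k w x :=
  fun i => aux_sorted_mono h i

lemma aux_exists_perm_of_pre {k : ℕ} {z x : Fin (k+1) → ℕ} (h : Pre k z x) :
    ∃ π : Equiv.Perm (Fin (k+1)), ∀ j, z (π j) ≤ x j := by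
  refine ⟨(Tuple.sort x).symm.trans (Tuple.sort z), fun j => ?_⟩
  have h2 := h ((Tuple.sort x).symm j)
  simp only [Function.comp_apply, Equiv.apply_symm_apply] at h2
  simpa [Equiv.trans_apply] using h2

lemma aux_S_nonempty {k : ℕ} (x : Fin (k+1) → ℕ) :
    Set.Nonempty {b | ∃ z, IsBasic k z b ∧ Pre k z x} := by
  refine ⟨0, (fun _ => 0), ⟨?_, ?_, ?_, ?_⟩, aux_pre_of_pointwise (fun j => Nat.zero_le _)⟩
  · simp
  · simp
  · intro _ i; exact Even.zero
  · intro h; exact absurd h (by simp)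

lemma aux_S_bdd {k : ℕ} (hk : 1 ≤ k) (x : Fin (k+1) → ℕ) :
    BddAbove {b | ∃ z, IsBasic k z b ∧ Pre k z x} := by
  refine ⟨∑ j, x j, fun b hb => ?_⟩
  obtain ⟨z, hzb, hzpre⟩ := hb
  obtain ⟨π, hπ⟩ := aux_exists_perm_of_pre hzpre
  have h1 : ∑ j, z (π j) ≤ ∑ j, x j := Finset.sum_le_sum (fun j _ => hπ j)
  have h2 : ∑ j, z (π j) = ∑ j, z j := Equiv.sum_comp π z
  have h3 : k * b ≤ ∑ j, x j := by rw [← hzb.1, ← h2]; exact h1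
  have h4 : b ≤ k * b := Nat.le_mul_of_pos_left b (by omega)
  omega

lemma aux_bval_spec {k : ℕ} (hk : 1 ≤ k) (x : Fin (k+1) → ℕ) :
    ∃ z, IsBasic k z (BVal k x) ∧ Pre k z x :=
  Nat.sSup_mem (aux_S_nonempty x) (aux_S_bdd hk x)

lemma aux_le_bval {k : ℕ} (hk : 1 ≤ k) {x : Fin (k+1) → ℕ} {b : ℕ}
    (hb : b ∈ {b | ∃ z, IsBasic k z b ∧ Pre k z x}) : b ≤ BVal k x :=
  le_csSup (aux_S_bdd hk x) hb


-- sum split: f t + sum over compl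
lemma aux_sum_split {k : ℕ} (f : Fin (k+1) → ℕ) (t : Fin (k+1)) :
    ∑ j, f j = f t + ∑ j ∈ ({t}ᶜ : Finset (Fin (k+1))), f j :=
  Fintype.sum_eq_add_sum_compl t f

lemma aux_card_compl {k : ℕ} (t : Fin (k+1)) :
    (({t}ᶜ : Finset (Fin (k+1)))).card = k := by
  simp [Finset.card_compl]

-- sum of (f - 1) over compl
lemma aux_sum_pred {k : ℕ} (f : Fin (k+1) → ℕ) (t : Fin (k+1))
    (h1 : ∀ j, j ≠ t → 1 ≤ f j) :
    ∑ j ∈ ({t}ᶜ : Finset (Fin (k+1))), (f j - 1) + k = ∑ j ∈ ({t}ᶜ : Finset (Fin (k+1))), f j := by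
  have : ∑ j ∈ ({t}ᶜ : Finset (Fin (k+1))), f j
      = ∑ j ∈ ({t}ᶜ : Finset (Fin (k+1))), ((f j - 1) + 1) := by
    refine Finset.sum_congr rfl (fun j hj => ?_)
    have hj' : j ≠ t := by simpa using hj
    have := h1 j hj'
    omega
  rw [this, Finset.sum_add_distrib, Finset.sum_const, aux_card_compl]
  simp

lemma aux_sum_sub_two {k : ℕ} (f : Fin (k+1) → ℕ) (h : ∀ j, 2 ≤ f j) :
    ∑ j, (f j - 2) + 2 * (k+1) = ∑ j, f j := by
  have : ∑ j, f j = ∑ j : Fin (k+1), ((f j - 2) + 2) := by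
    refine Finset.sum_congr rfl (fun j _ => ?_)
    have := h j
    omega
  rw [this, Finset.sum_add_distrib, Finset.sum_const]
  simp [mul_comm]

-- truncation lemma D
lemma aux_truncD {k b c : ℕ} {ζ : Fin (k+1) → ℕ} (hsum : ∑ j, ζ j = k * b)
    (hle : ∀ j, ζ j ≤ b) (hcb : c ≤ b) : k * c ≤ ∑ j, min (ζ j) c := by
  classical
  have hdef : ∑ j : Fin (k+1), (b - ζ j) = b := by
    have h1 : ∑ j : Fin (k+1), ((b - ζ j) + ζ j) = ∑ j : Fin (k+1), b := by
      refine Finset.sum_congr rfl (fun j _ => ?_); have := hle j; omega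
    rw [Finset.sum_add_distrib, hsum, Finset.sum_const] at h1
    simp only [Finset.card_univ, Fintype.card_fin, smul_eq_mul] at h1
    have h2 : (k+1) * b = k * b + b := by ring
    omega
  have hmc : ∑ j : Fin (k+1), (min (ζ j) c + (c - ζ j)) = ∑ j : Fin (k+1), c := by
    refine Finset.sum_congr rfl (fun j _ => ?_)
    rcases le_total (ζ j) c with h | h <;> omega
  rw [Finset.sum_add_distrib, Finset.sum_const] at hmc
  simp only [Finset.card_univ, Fintype.card_fin, smul_eq_mul] at hmc
  -- bound SA := ∑ (c - ζ j)
  set A := Finset.univ.filter (fun j : Fin (k+1) => ζ j < c) with hA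
  have hSA : ∑ j : Fin (k+1), (c - ζ j) = ∑ j ∈ A, (c - ζ j) := by
    rw [hA]
    exact (Finset.sum_filter_of_ne (fun j _ h0 => by omega)).symm
  have hAsum : ∑ j ∈ A, (c - ζ j) + A.card * (b - c) ≤ b := by
    have h1 : ∑ j ∈ A, ((c - ζ j) + (b - c)) = ∑ j ∈ A, (b - ζ j) := by
      refine Finset.sum_congr rfl (fun j hj => ?_)
      have hj' : ζ j < c := by rw [hA] at hj; simpa using hj
      have := hle j; omega
    have h2 : ∑ j ∈ A, (b - ζ j) ≤ ∑ j : Fin (k+1), (b - ζ j) :=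
      Finset.sum_le_sum_of_subset (Finset.filter_subset _ _)
    rw [Finset.sum_add_distrib, Finset.sum_const, smul_eq_mul] at h1
    omega
  have hSAle : ∑ j : Fin (k+1), (c - ζ j) ≤ c := by
    rcases Nat.eq_zero_or_pos A.card with h0 | h0
    · rw [hSA, Finset.card_eq_zero.mp h0]; simp
    · have : (b - c) ≤ A.card * (b - c) := Nat.le_mul_of_pos_left _ h0
      omega
  have hkc : (k+1) * c = k * c + c := by ring
  omega

-- truncation lemma D2 (strict version)
lemma aux_truncD2 {k b c : ℕ} {ζ : Fin (k+1) → ℕ} (hsum : ∑ j, ζ j = k * b)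
    (hle : ∀ j, ζ j ≤ b) (h2 : ∀ j, 2 ≤ ζ j) (hc2 : 2 ≤ c) (hcb2 : c + 2 ≤ b) :
    k * c + 2 ≤ ∑ j, min (ζ j) c := by
  classical
  have hdef : ∑ j : Fin (k+1), (b - ζ j) = b := by
    have h1 : ∑ j : Fin (k+1), ((b - ζ j) + ζ j) = ∑ j : Fin (k+1), b := by
      refine Finset.sum_congr rfl (fun j _ => ?_); have := hle j; omega
    rw [Finset.sum_add_distrib, hsum, Finset.sum_const] at h1
    simp only [Finset.card_univ, Fintype.card_fin, smul_eq_mul] at h1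
    have h2' : (k+1) * b = k * b + b := by ring
    omega
  have hmc : ∑ j : Fin (k+1), (min (ζ j) c + (c - ζ j)) = ∑ j : Fin (k+1), c := by
    refine Finset.sum_congr rfl (fun j _ => ?_)
    rcases le_total (ζ j) c with h | h <;> omega
  rw [Finset.sum_add_distrib, Finset.sum_const] at hmc
  simp only [Finset.card_univ, Fintype.card_fin, smul_eq_mul] at hmc
  set A := Finset.univ.filter (fun j : Fin (k+1) => ζ j < c) with hA
  have hSA : ∑ j : Fin (k+1), (c - ζ j) = ∑ j ∈ A, (c - ζ j) := by
    rw [hA]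
    exact (Finset.sum_filter_of_ne (fun j _ h0 => by omega)).symm
  have hAsum : ∑ j ∈ A, (c - ζ j) + A.card * (b - c) ≤ b := by
    have h1 : ∑ j ∈ A, ((c - ζ j) + (b - c)) = ∑ j ∈ A, (b - ζ j) := by
      refine Finset.sum_congr rfl (fun j hj => ?_)
      have hj' : ζ j < c := by rw [hA] at hj; simpa using hj
      have := hle j; omega
    have h2' : ∑ j ∈ A, (b - ζ j) ≤ ∑ j : Fin (k+1), (b - ζ j) :=
      Finset.sum_le_sum_of_subset (Finset.filter_subset _ _)
    rw [Finset.sum_add_distrib, Finset.sum_const, smul_eq_mul] at h1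
    omega
  have hSAle : ∑ j : Fin (k+1), (c - ζ j) + 2 ≤ c := by
    rcases Nat.lt_or_ge A.card 2 with hcard | hcard
    · interval_cases h : A.card
      · rw [hSA, Finset.card_eq_zero.mp h]; simp; omega
      · obtain ⟨a, ha⟩ := Finset.card_eq_one.mp h
        rw [hSA, ha, Finset.sum_singleton]
        have := h2 a
        omega
    · have : 2 * (b - c) ≤ A.card * (b - c) := Nat.mul_le_mul_right _ hcard
      omega
  have hkc : (k+1) * c = k * c + c := by ring
  omega


lemma aux_sum_pattern {k : ℕ} (t : Fin (k+1)) :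
    ∑ j : Fin (k+1), (if j = t then (0:ℕ) else 1) = k := by
  rw [Fintype.sum_eq_add_sum_compl t]
  simp only [if_pos rfl]
  have : ∑ j ∈ ({t}ᶜ : Finset (Fin (k+1))), (if j = t then (0:ℕ) else 1)
      = ∑ j ∈ ({t}ᶜ : Finset (Fin (k+1))), 1 := by
    refine Finset.sum_congr rfl (fun j hj => ?_)
    have hj' : j ≠ t := by simpa using hj
    simp [hj']
  rw [this, Finset.sum_const]
  simp [Finset.card_compl]

lemma aux_parity_sum {k : ℕ} {u : Fin (k+1) → ℕ} {t : Fin (k+1)}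
    (hodd : ∀ j, j ≠ t → Odd (u j)) (heven : Even (u t)) :
    (∑ j, u j) % 2 = k % 2 := by
  have h1 : (∑ j, u j) % 2 = (∑ j : Fin (k+1), u j % 2) % 2 := Finset.sum_nat_mod _ _ _
  have h2 : ∑ j : Fin (k+1), u j % 2 = ∑ j : Fin (k+1), (if j = t then (0:ℕ) else 1) := by
    refine Finset.sum_congr rfl (fun j _ => ?_)
    by_cases hj : j = t
    · subst hj; simp [Nat.even_iff.mp heven]
    · simp [hj, Nat.odd_iff.mp (hodd j hj)]
  rw [h1, h2, aux_sum_pattern]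

lemma aux_reduceR {k : ℕ} (N : ℕ) : ∀ (u : Fin (k+1) → ℕ) (t : Fin (k+1)) (c : ℕ), Odd c →
    (∀ j, j ≠ t → Odd (u j)) → Even (u t) → (∑ j, u j) = N → k * c ≤ N →
    ∃ w : Fin (k+1) → ℕ, (∀ j, w j ≤ u j) ∧ Even (w t) ∧ (∀ j, j ≠ t → Odd (w j)) ∧
      (∑ j, w j) = k * c := by
  induction N using Nat.strong_induction_on with
  | _ N IH =>
    intro u t c hc hodd heven hsum hle
    rcases eq_or_lt_of_le hle with hEq | hlt
    · exact ⟨u, fun j => le_refl _, heven, hodd, by omega⟩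
    -- N ≥ k*c + 2 by parity
    have hpar : N % 2 = k % 2 := by rw [← hsum]; exact aux_parity_sum hodd heven
    have hkcpar : (k * c) % 2 = k % 2 := by
      obtain ⟨m, rfl⟩ := hc
      have : k * (2 * m + 1) = 2 * (k * m) + k := by ring
      omega
    have hge2 : k * c + 2 ≤ N := by omega
    -- find a coordinate to decrement
    have hfind : ∃ j₀ : Fin (k+1), 2 ≤ u j₀ ∧ (j₀ = t ∨ 3 ≤ u j₀) := by
      by_contra hno
      push_neg at hno
      have hval : ∀ j : Fin (k+1), u j ≤ (if j = t then (0:ℕ) else 1) := by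
        intro j
        by_cases hj : j = t
        · simp only [if_pos hj]
          have h2 := hno j
          have hev : Even (u j) := hj ▸ heven
          rcases Nat.lt_or_ge (u j) 2 with h | h
          · have := Nat.even_iff.mp hev; omega
          · exact absurd hj (h2 h).1
        · simp only [if_neg hj]
          have := hno j
          have ho := Nat.odd_iff.mp (hodd j hj)
          rcases Nat.lt_or_ge (u j) 2 with h | h
          · omega
          · have h3 := this h
            omega
      have hsum2 : ∑ j, u j ≤ ∑ j : Fin (k+1), (if j = t then (0:ℕ) else 1) :=
        Finset.sum_le_sum (fun j _ => hval j)
      rw [aux_sum_pattern] at hsum2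
      have hck : k ≤ k * c := Nat.le_mul_of_pos_right _ (by rcases hc with ⟨m, hm⟩; omega)
      omega
    obtain ⟨j₀, hj₀2, hj₀t⟩ := hfind
    set u' := Function.update u j₀ (u j₀ - 2) with hu'
    have hsum' : ∑ j, u' j = N - 2 := by
      rw [hu', Finset.sum_update_of_mem (Finset.mem_univ j₀)]
      have : ∑ j, u j = u j₀ + ∑ j ∈ Finset.univ \ {j₀}, u j := by
        rw [Finset.sum_eq_sum_sdiff_singleton_add (Finset.mem_univ j₀)]
        omega
      omega
    have hodd' : ∀ j, j ≠ t → Odd (u' j) := by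
      intro j hj
      rw [hu']
      by_cases hjj : j = j₀
      · subst hjj
        rw [Function.update_self]
        have := Nat.odd_iff.mp (hodd j hj)
        rw [Nat.odd_iff]
        omega
      · rw [Function.update_of_ne hjj]
        exact hodd j hj
    have heven' : Even (u' t) := by
      rw [hu']
      by_cases hjj : t = j₀
      · subst hjj
        rw [Function.update_self]
        have := Nat.even_iff.mp heven
        rw [Nat.even_iff]
        omega
      · rw [Function.update_of_ne hjj]
        exact heven
    obtain ⟨w, hw1, hw2, hw3, hw4⟩ := IH (N - 2) (by omega) u' t c hc hodd' heven' hsum' (by omega)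
    refine ⟨w, fun j => ?_, hw2, hw3, hw4⟩
    have := hw1 j
    rw [hu'] at this
    by_cases hjj : j = j₀
    · subst hjj; rw [Function.update_self] at this; omega
    · rw [Function.update_of_ne hjj] at this; exact this

theorem stmt10 (k : ℕ) (hk : 2 ≤ k) (x x' : Fin (k+1) → ℕ)
    (h : MoveK k x x') (heven : Even (BVal k x)) :
    ¬ Even (BVal k x') := by
  classical
  intro heven'
  obtain ⟨i₀, hpos, hx'⟩ := h
  have hk1 : 1 ≤ k := by omega
  have hx'cases : ∀ j, (j = i₀ ∧ x' j = x j) ∨ (j ≠ i₀ ∧ x' j + 1 = x j) := by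
    intro j
    by_cases hj : j = i₀
    · exact Or.inl ⟨hj, by rw [hx' j, if_pos hj]⟩
    · refine Or.inr ⟨hj, ?_⟩
      rw [hx' j, if_neg hj]
      have := hpos j hj
      omega
  have hxx' : ∀ j, x' j ≤ x j := by
    intro j; rcases hx'cases j with ⟨_, h⟩ | ⟨_, h⟩ <;> omega
  have hx'i₀ : x' i₀ = x i₀ := by rw [hx' i₀, if_pos rfl]
  have hx'ne : ∀ j, j ≠ i₀ → x' j + 1 = x j := by
    intro j hj
    rcases hx'cases j with ⟨h1, _⟩ | ⟨_, h2⟩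
    · exact absurd h1 hj
    · exact h2
  set b := BVal k x with hbdef
  set b' := BVal k x' with hb'def
  obtain ⟨z, hzb, hzpre⟩ := aux_bval_spec hk1 x
  rw [← hbdef] at hzb
  obtain ⟨π, hπ⟩ := aux_exists_perm_of_pre hzpre
  set ζ : Fin (k+1) → ℕ := fun j => z (π j) with hζdef
  have hζx : ∀ j, ζ j ≤ x j := hπ
  have hζsum : ∑ j, ζ j = k * b := by
    rw [hζdef]
    rw [Equiv.sum_comp π z]
    exact hzb.1
  have hζle : ∀ j, ζ j ≤ b := fun j => hzb.2.1 _
  have hζeven : ∀ j, Even (ζ j) := fun j => hzb.2.2.1 heven _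
  -- Step 0 : 2 ≤ b
  have h1mem : (1:ℕ) ∈ {n | ∃ z, IsBasic k z n ∧ Pre k z x} := by
    refine ⟨fun j => if j = i₀ then 0 else 1, ⟨?_, ?_, ?_, ?_⟩, aux_pre_of_pointwise ?_⟩
    · rw [aux_sum_pattern]; omega
    · intro i; by_cases hi : i = i₀ <;> simp [hi]
    · intro hev; exact absurd (Nat.even_iff.mp hev) (by omega)
    · intro _
      refine ⟨i₀, by simp, fun j hj => ?_⟩
      by_contra hne
      simp only [if_neg hne] at hj
      have := Nat.even_iff.mp hj
      omega
    · intro j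
      by_cases hj : j = i₀
      · simp [hj]
      · rw [if_neg hj]; exact hpos j hj
  have hb2 : 2 ≤ b := by
    have h1 := aux_le_bval hk1 h1mem
    have := Nat.even_iff.mp heven
    omega
  -- Step 1 : b' ≤ b
  have hb'le : b' ≤ b := by
    obtain ⟨z', hz'b, hz'pre⟩ := aux_bval_spec hk1 x'
    exact aux_le_bval hk1 ⟨z', hz'b, fun i => (hz'pre i).trans (aux_sorted_mono hxx' i)⟩
  -- Step 2 : b' ≠ b
  have hb'ne : b' ≠ b := by
    intro hEq
    obtain ⟨z', hz'b, hz'pre⟩ := aux_bval_spec hk1 x'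
    rw [← hb'def] at hz'b
    obtain ⟨σ, hσ⟩ := aux_exists_perm_of_pre hz'pre
    have hz'even : ∀ j, Even (z' j) := hz'b.2.2.1 (by rw [hEq]; exact heven)
    set w : Fin (k+1) → ℕ := fun j => if j = i₀ then z' (σ j) else z' (σ j) + 1 with hwdef
    have hsplit1 := aux_sum_split w i₀
    have hsplit2 : ∑ j, z' (σ j) = z' (σ i₀) + ∑ j ∈ ({i₀}ᶜ : Finset (Fin (k+1))), z' (σ j) :=
      aux_sum_split (fun j => z' (σ j)) i₀
    have hcongr : ∑ j ∈ ({i₀}ᶜ : Finset (Fin (k+1))), w j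
        = ∑ j ∈ ({i₀}ᶜ : Finset (Fin (k+1))), (z' (σ j) + 1) := by
      refine Finset.sum_congr rfl (fun j hj => ?_)
      have hj' : j ≠ i₀ := by simpa using hj
      simp [hwdef, hj']
    have hcongr2 : ∑ j ∈ ({i₀}ᶜ : Finset (Fin (k+1))), (z' (σ j) + 1)
        = ∑ j ∈ ({i₀}ᶜ : Finset (Fin (k+1))), z' (σ j) + k := by
      rw [Finset.sum_add_distrib, Finset.sum_const, aux_card_compl]
      simp
    have hσsum : ∑ j, z' (σ j) = k * b := by
      rw [Equiv.sum_comp σ z', hz'b.1, hEq]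
    have hwi : w i₀ = z' (σ i₀) := by simp [hwdef]
    have hwsum : ∑ j, w j = k * (b + 1) := by
      have hkb : k * (b+1) = k * b + k := by ring
      omega
    have hmem : (b + 1) ∈ {n | ∃ z, IsBasic k z n ∧ Pre k z x} := by
      refine ⟨w, ⟨hwsum, ?_, ?_, ?_⟩, aux_pre_of_pointwise ?_⟩
      · intro i
        have h1 := hz'b.2.1 (σ i)
        have hwi2 : w i = z' (σ i) ∨ w i = z' (σ i) + 1 := by
          rw [hwdef]
          by_cases hi : i = i₀
          · left; simp [hi]
          · right; simp [hi]
        omega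
      · intro hev
        exfalso
        have h1 := Nat.even_iff.mp hev
        have h2 := Nat.even_iff.mp heven
        omega
      · intro _
        refine ⟨i₀, by simpa [hwdef] using hz'even (σ i₀), fun j hj => ?_⟩
        by_contra hne
        have hje := Nat.even_iff.mp (hz'even (σ j))
        rw [hwdef] at hj
        simp only [if_neg hne] at hj
        have := Nat.even_iff.mp hj
        omega
      · intro j
        have h1 := hσ j
        by_cases hj : j = i₀
        · rw [hj] at h1 ⊢
          rw [hwi, hx'i₀] at *
          omega
        · have h2 := hx'ne j hj
          simp only [hwdef, if_neg hj]
          omega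
    have := aux_le_bval hk1 hmem
    omega
  -- two small coordinates of ζ are impossible
  have hnotwo : ∀ a c : Fin (k+1), a ≠ c → ζ a ≤ 1 → ζ c ≤ 1 → False := by
    intro a c hac ha hc
    have hza : ζ a = 0 := by have := Nat.even_iff.mp (hζeven a); omega
    have hzc : ζ c = 0 := by have := Nat.even_iff.mp (hζeven c); omega
    have hsub : ({a, c} : Finset (Fin (k+1))) ⊆ Finset.univ := Finset.subset_univ _
    have hsplit : ∑ j ∈ Finset.univ \ ({a, c} : Finset (Fin (k+1))), ζ j
        + ∑ j ∈ ({a, c} : Finset (Fin (k+1))), ζ j = ∑ j, ζ j := Finset.sum_sdiff hsub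
    have hpair : ∑ j ∈ ({a, c} : Finset (Fin (k+1))), ζ j = 0 := by
      rw [Finset.sum_pair hac, hza, hzc]
    have hcard : (Finset.univ \ ({a, c} : Finset (Fin (k+1)))).card = k - 1 := by
      rw [Finset.card_sdiff_of_subset hsub, Finset.card_pair hac, Finset.card_univ, Fintype.card_fin]
      omega
    have hbound : ∑ j ∈ Finset.univ \ ({a, c} : Finset (Fin (k+1))), ζ j ≤ (k-1) * b := by
      calc ∑ j ∈ Finset.univ \ ({a, c} : Finset (Fin (k+1))), ζ j
          ≤ (Finset.univ \ ({a, c} : Finset (Fin (k+1)))).card • b :=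
            Finset.sum_le_card_nsmul _ _ _ (fun j _ => hζle j)
        _ = (k-1) * b := by rw [hcard, smul_eq_mul]
    have hk1b : (k-1) * b + b = k * b := by
      have hkk : k - 1 + 1 = k := by omega
      calc (k-1) * b + b = (k-1+1) * b := by ring
        _ = k * b := by rw [hkk]
    omega
  -- Step 3 : 2 ≤ b'
  have hb'2 : 2 ≤ b' := by
    have hone : ∃ t : Fin (k+1), ∀ j, j ≠ t → 1 ≤ x' j := by
      by_cases hz0 : ∃ j, x' j = 0
      · obtain ⟨t, ht⟩ := hz0
        refine ⟨t, fun j hj => ?_⟩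
        by_contra hlt
        push_neg at hlt
        have hxj : x j ≤ 1 := by rcases hx'cases j with ⟨_, h⟩ | ⟨_, h⟩ <;> omega
        have hxt : x t ≤ 1 := by rcases hx'cases t with ⟨_, h⟩ | ⟨_, h⟩ <;> omega
        exact hnotwo j t hj ((hζx j).trans hxj) ((hζx t).trans hxt)
      · push_neg at hz0
        exact ⟨i₀, fun j _ => by have := hz0 j; omega⟩
    obtain ⟨t, ht⟩ := hone
    have hmem : (1:ℕ) ∈ {n | ∃ z, IsBasic k z n ∧ Pre k z x'} := by
      refine ⟨fun j => if j = t then 0 else 1, ⟨?_, ?_, ?_, ?_⟩, aux_pre_of_pointwise ?_⟩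
      · rw [aux_sum_pattern]; omega
      · intro i; by_cases hi : i = t <;> simp [hi]
      · intro hev; exact absurd (Nat.even_iff.mp hev) (by omega)
      · intro _
        refine ⟨t, by simp, fun j hj => ?_⟩
        by_contra hne
        simp only [if_neg hne] at hj
        have := Nat.even_iff.mp hj
        omega
      · intro j
        by_cases hj : j = t
        · simp [hj]
        · rw [if_neg hj]; exact ht j hj
    have h1 := aux_le_bval hk1 hmem
    have := Nat.even_iff.mp heven'
    omega
  have hb'b : b' + 2 ≤ b := by
    have h1 := Nat.even_iff.mp heven
    have h2 := Nat.even_iff.mp heven'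
    omega
  have hoddb'1 : Odd (b' + 1) := by
    rw [Nat.odd_iff]
    have := Nat.even_iff.mp heven'
    omega
  -- final contradiction helper
  have hfinal : ∀ (w : Fin (k+1) → ℕ) (t : Fin (k+1)), (∀ j, w j ≤ x' j) →
      (∀ j, w j ≤ b' + 1) → Even (w t) → (∀ j, j ≠ t → Odd (w j)) →
      (∑ j, w j) = k * (b' + 1) → False := by
    intro w t hwx hwb hwev hwodd hwsum
    have hmem : (b' + 1) ∈ {n | ∃ z, IsBasic k z n ∧ Pre k z x'} := by
      refine ⟨w, ⟨hwsum, hwb, ?_, ?_⟩, aux_pre_of_pointwise hwx⟩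
      · intro hev
        exfalso
        have h1 := Nat.even_iff.mp hev
        have h2 := Nat.even_iff.mp heven'
        omega
      · intro _
        refine ⟨t, hwev, fun j hj => ?_⟩
        by_contra hne
        have h1 := Nat.odd_iff.mp (hwodd j hne)
        have h2 := Nat.even_iff.mp hj
        omega
    have := aux_le_bval hk1 hmem
    omega
  set c := b' + 2 with hcdef
  have hc2 : 2 ≤ c := by omega
  have hcb : c ≤ b := hb'b
  have hkc : k * c = k * (b' + 1) + k := by rw [hcdef]; ring
  have hmodd : ∀ j, 2 ≤ ζ j → Odd (min (ζ j) c - 1) := by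
    intro j h2
    have hce : c % 2 = 0 := by
      have := Nat.even_iff.mp heven'
      omega
    have hze := Nat.even_iff.mp (hζeven j)
    rw [Nat.odd_iff]
    rcases le_total (ζ j) c with hm | hm
    · rw [min_eq_left hm]; omega
    · rw [min_eq_right hm]; omega
  by_cases hzero : ∃ j₀, ζ j₀ = 0
  -- Case (i) : ζ has a zero coordinate
  · obtain ⟨j₀, hj₀⟩ := hzero
    have h2rest : ∀ j, j ≠ j₀ → 2 ≤ ζ j := by
      intro j hj
      by_contra hlt
      push_neg at hlt
      exact hnotwo j j₀ hj (by omega) (by omega)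
    set u : Fin (k+1) → ℕ := fun j => if j = j₀ then 0 else min (ζ j) c - 1 with hudef
    have hux : ∀ j, u j ≤ x' j := by
      intro j
      by_cases hj : j = j₀
      · simp [hudef, hj]
      · rw [hudef]
        simp only [if_neg hj]
        have h2 := h2rest j hj
        have hm : min (ζ j) c ≤ ζ j := min_le_left _ _
        have hx1 := hζx j
        rcases hx'cases j with ⟨_, he⟩ | ⟨_, he⟩ <;> omega
    have hub : ∀ j, u j ≤ b' + 1 := by
      intro j
      rw [hudef]
      by_cases hj : j = j₀
      · simp [hj]
      · simp only [if_neg hj]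
        have : min (ζ j) c ≤ c := min_le_right _ _
        omega
    have huev : Even (u j₀) := by simp [hudef]
    have huodd : ∀ j, j ≠ j₀ → Odd (u j) := by
      intro j hj
      rw [hudef]
      simp only [if_neg hj]
      exact hmodd j (h2rest j hj)
    have husum : k * (b' + 1) ≤ ∑ j, u j := by
      have hs := aux_sum_split u j₀
      have hs2 : ∑ j, min (ζ j) c = min (ζ j₀) c + ∑ j ∈ ({j₀}ᶜ : Finset (Fin (k+1))), min (ζ j) c :=
        aux_sum_split (fun j => min (ζ j) c) j₀
      have hcongr : ∑ j ∈ ({j₀}ᶜ : Finset (Fin (k+1))), u j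
          = ∑ j ∈ ({j₀}ᶜ : Finset (Fin (k+1))), (min (ζ j) c - 1) := by
        refine Finset.sum_congr rfl (fun j hj => ?_)
        have hj' : j ≠ j₀ := by simpa using hj
        simp [hudef, hj']
      have hpred : (∑ j ∈ ({j₀}ᶜ : Finset (Fin (k+1))), (min (ζ j) c - 1)) + k
          = ∑ j ∈ ({j₀}ᶜ : Finset (Fin (k+1))), min (ζ j) c :=
        aux_sum_pred (fun j => min (ζ j) c) j₀ (fun j hj =>
          le_min (by have := h2rest j hj; omega) (by omega))
      have hD := aux_truncD hζsum hζle hcb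
      have hmin0 : min (ζ j₀) c = 0 := by rw [hj₀]; simp
      have hu0 : u j₀ = 0 := by simp [hudef]
      omega
    obtain ⟨w, hw1, hw2, hw3, hw4⟩ :=
      aux_reduceR (∑ j, u j) u j₀ (b' + 1) hoddb'1 huodd huev rfl husum
    exact hfinal w j₀ (fun j => (hw1 j).trans (hux j)) (fun j => (hw1 j).trans (hub j))
      hw2 hw3 hw4
  -- Case (ii) : all coordinates of ζ are at least 2
  · push_neg at hzero
    have h2all : ∀ j, 2 ≤ ζ j := by
      intro j
      have h1 := hzero j
      have := Nat.even_iff.mp (hζeven j)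
      omega
    by_cases hsmall : ζ i₀ ≤ b'
    -- Case (ii)a
    · set u : Fin (k+1) → ℕ := fun j => if j = i₀ then ζ i₀ else min (ζ j) c - 1 with hudef
      have hux : ∀ j, u j ≤ x' j := by
        intro j
        by_cases hj : j = i₀
        · rw [hudef]
          simp only [hj, if_pos]
          rw [hx'i₀]
          exact hζx i₀
        · rw [hudef]
          simp only [if_neg hj]
          have h2 := h2all j
          have hm : min (ζ j) c ≤ ζ j := min_le_left _ _
          have hx1 := hζx j
          have he := hx'ne j hj
          omega
      have hub : ∀ j, u j ≤ b' + 1 := by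
        intro j
        rw [hudef]
        by_cases hj : j = i₀
        · simp only [hj, if_pos]; omega
        · simp only [if_neg hj]
          have : min (ζ j) c ≤ c := min_le_right _ _
          omega
      have huev : Even (u i₀) := by
        rw [hudef]
        simpa using hζeven i₀
      have huodd : ∀ j, j ≠ i₀ → Odd (u j) := by
        intro j hj
        rw [hudef]
        simp only [if_neg hj]
        exact hmodd j (h2all j)
      have husum : k * (b' + 1) ≤ ∑ j, u j := by
        have hs := aux_sum_split u i₀
        have hs2 : ∑ j, min (ζ j) c = min (ζ i₀) c + ∑ j ∈ ({i₀}ᶜ : Finset (Fin (k+1))), min (ζ j) c :=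
        aux_sum_split (fun j => min (ζ j) c) i₀
        have hcongr : ∑ j ∈ ({i₀}ᶜ : Finset (Fin (k+1))), u j
            = ∑ j ∈ ({i₀}ᶜ : Finset (Fin (k+1))), (min (ζ j) c - 1) := by
          refine Finset.sum_congr rfl (fun j hj => ?_)
          have hj' : j ≠ i₀ := by simpa using hj
          simp [hudef, hj']
        have hpred : (∑ j ∈ ({i₀}ᶜ : Finset (Fin (k+1))), (min (ζ j) c - 1)) + k
            = ∑ j ∈ ({i₀}ᶜ : Finset (Fin (k+1))), min (ζ j) c :=
          aux_sum_pred (fun j => min (ζ j) c) i₀ (fun j hj =>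
            le_min (by have := h2all j; omega) (by omega))
        have hD := aux_truncD hζsum hζle hcb
        have hmini : min (ζ i₀) c = ζ i₀ := min_eq_left (by omega)
        have hui : u i₀ = ζ i₀ := by simp [hudef]
        omega
      obtain ⟨w, hw1, hw2, hw3, hw4⟩ :=
        aux_reduceR (∑ j, u j) u i₀ (b' + 1) hoddb'1 huodd huev rfl husum
      exact hfinal w i₀ (fun j => (hw1 j).trans (hux j)) (fun j => (hw1 j).trans (hub j))
        hw2 hw3 hw4
    · push_neg at hsmall
      have hci₀ : c ≤ ζ i₀ := by
        have h1 := Nat.even_iff.mp (hζeven i₀)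
        have h2 := Nat.even_iff.mp heven'
        omega
      by_cases hcase : c + 2 ≤ b
      -- Case (ii)b
      · set u : Fin (k+1) → ℕ := fun j => if j = i₀ then b' else min (ζ j) c - 1 with hudef
        have hux : ∀ j, u j ≤ x' j := by
          intro j
          by_cases hj : j = i₀
          · rw [hudef]
            simp only [hj, if_pos]
            rw [hx'i₀]
            have := hζx i₀
            omega
          · rw [hudef]
            simp only [if_neg hj]
            have h2 := h2all j
            have hm : min (ζ j) c ≤ ζ j := min_le_left _ _
            have hx1 := hζx j
            have he := hx'ne j hj
            omega
        have hub : ∀ j, u j ≤ b' + 1 := by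
          intro j
          rw [hudef]
          by_cases hj : j = i₀
          · simp only [hj, if_pos]; omega
          · simp only [if_neg hj]
            have : min (ζ j) c ≤ c := min_le_right _ _
            omega
        have huev : Even (u i₀) := by
          rw [hudef]
          simpa using heven'
        have huodd : ∀ j, j ≠ i₀ → Odd (u j) := by
          intro j hj
          rw [hudef]
          simp only [if_neg hj]
          exact hmodd j (h2all j)
        have husum : k * (b' + 1) ≤ ∑ j, u j := by
          have hs := aux_sum_split u i₀
          have hs2 : ∑ j, min (ζ j) c = min (ζ i₀) c + ∑ j ∈ ({i₀}ᶜ : Finset (Fin (k+1))), min (ζ j) c :=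
        aux_sum_split (fun j => min (ζ j) c) i₀
          have hcongr : ∑ j ∈ ({i₀}ᶜ : Finset (Fin (k+1))), u j
              = ∑ j ∈ ({i₀}ᶜ : Finset (Fin (k+1))), (min (ζ j) c - 1) := by
            refine Finset.sum_congr rfl (fun j hj => ?_)
            have hj' : j ≠ i₀ := by simpa using hj
            simp [hudef, hj']
          have hpred : (∑ j ∈ ({i₀}ᶜ : Finset (Fin (k+1))), (min (ζ j) c - 1)) + k
              = ∑ j ∈ ({i₀}ᶜ : Finset (Fin (k+1))), min (ζ j) c :=
            aux_sum_pred (fun j => min (ζ j) c) i₀ (fun j hj =>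
              le_min (by have := h2all j; omega) (by omega))
          have hD2 := aux_truncD2 hζsum hζle h2all hc2 hcase
          have hmini : min (ζ i₀) c = c := min_eq_right hci₀
          have hui : u i₀ = b' := by simp [hudef]
          omega
        obtain ⟨w, hw1, hw2, hw3, hw4⟩ :=
          aux_reduceR (∑ j, u j) u i₀ (b' + 1) hoddb'1 huodd huev rfl husum
        exact hfinal w i₀ (fun j => (hw1 j).trans (hux j)) (fun j => (hw1 j).trans (hub j))
          hw2 hw3 hw4
      -- Case (ii)c : b = b' + 2 and ζ i₀ = b
      · have hbc : b = b' + 2 := by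
          have h1 := Nat.even_iff.mp heven
          have h2 := Nat.even_iff.mp heven'
          omega
        have hζi₀b : ζ i₀ = b := by
          have := hζle i₀
          omega
        by_cases hgood : ∃ t, t ≠ i₀ ∧ ζ t + 2 ≤ b ∧ ζ t < x t
        · obtain ⟨t, hti, htb, htx⟩ := hgood
          set w : Fin (k+1) → ℕ := fun j => if j = t then ζ t else ζ j - 1 with hwdef
          have hwx : ∀ j, w j ≤ x' j := by
            intro j
            by_cases hj : j = t
            · rw [hwdef]
              simp only [hj, if_pos]
              have he := hx'ne t hti
              omega
            · rw [hwdef]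
              simp only [if_neg hj]
              have h2 := h2all j
              have hx1 := hζx j
              by_cases hji : j = i₀
              · rw [hji, hx'i₀]
                have := hζx i₀
                omega
              · have he := hx'ne j hji
                omega
          have hwb : ∀ j, w j ≤ b' + 1 := by
            intro j
            rw [hwdef]
            by_cases hj : j = t
            · simp only [hj, if_pos]; omega
            · simp only [if_neg hj]
              have := hζle j
              omega
          have hwev : Even (w t) := by
            rw [hwdef]
            simpa using hζeven t
          have hwodd : ∀ j, j ≠ t → Odd (w j) := by
            intro j hj
            rw [hwdef]
            simp only [if_neg hj]
            have h2 := h2all j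
            have := Nat.even_iff.mp (hζeven j)
            rw [Nat.odd_iff]
            omega
          have hwsum : ∑ j, w j = k * (b' + 1) := by
            have hs := aux_sum_split w t
            have hs2 := aux_sum_split ζ t
            have hcongr : ∑ j ∈ ({t}ᶜ : Finset (Fin (k+1))), w j
                = ∑ j ∈ ({t}ᶜ : Finset (Fin (k+1))), (ζ j - 1) := by
              refine Finset.sum_congr rfl (fun j hj => ?_)
              have hj' : j ≠ t := by simpa using hj
              simp [hwdef, hj']
            have hpred := aux_sum_pred ζ t (fun j hj => by have := h2all j; omega)
            have hwt : w t = ζ t := by simp [hwdef]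
            have hkb : k * b = k * (b' + 1) + k := by rw [hbc]; ring
            omega
          exact hfinal w t hwx hwb hwev hwodd hwsum
        · push_neg at hgood
          obtain ⟨z'', hz''b, hz''pre⟩ := aux_bval_spec hk1 x'
          rw [← hb'def] at hz''b
          obtain ⟨σ', hσ'⟩ := aux_exists_perm_of_pre hz''pre
          have hz''even : ∀ j, Even (z'' j) := hz''b.2.2.1 heven'
          have hz''le : ∀ j, z'' j ≤ b' := fun j => hz''b.2.1 j
          have hkey : ∀ j, z'' (σ' j) + 2 ≤ ζ j := by
            intro j
            by_cases hj : j = i₀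
            · rw [hj, hζi₀b]
              have := hz''le (σ' i₀)
              omega
            · have hζb := hζle j
              have hζe := Nat.even_iff.mp (hζeven j)
              have hbe := Nat.even_iff.mp heven
              by_cases hjb : ζ j = b
              · have := hz''le (σ' j)
                omega
              · have hstep : ζ j + 2 ≤ b := by omega
                have hxle : x j ≤ ζ j := hgood j hj hstep
                have hσj := hσ' j
                have hxe := hx'ne j hj
                have hze := Nat.even_iff.mp (hz''even (σ' j))
                have hζxj := hζx j
                have h2 := h2all j
                omega
          have hsum1 : ∑ j, z'' (σ' j) = k * b' := by
            rw [Equiv.sum_comp σ' z'']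
            exact hz''b.1
          have hsum2 : ∑ j, z'' (σ' j) ≤ ∑ j, (ζ j - 2) :=
            Finset.sum_le_sum (fun j _ => by have := hkey j; omega)
          have hsub2 := aux_sum_sub_two ζ h2all
          have hkb : k * b = k * b' + 2 * k := by rw [hbc]; ring
          omega
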